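/- Let ψ : ℝ^n → ℝ^{2n-1} be ψ(v₁,…,v_{n-1},y) = (v₁,…,v_{n-1}, y², v₁y,…,v_{n-1}y), and fix 1 ≤ i ≤ n-1. Then the vector field η on ℝ^{2n-1} with η_W = 2X_i, η_{X_j} = V_i·V_j for all 1 ≤ j ≤ n-1, and all other components zero, is liftable over ψ, with lift ξ whose only nonzero source component is ξ_y = v_i. -/

import Mathlib

/-- For ψ(v,y) = (v, y², v₁y,…,v_{n-1}y) and fixed index i, the vector field
η with η_W = 2X_i, η_{X_j} = V_i·V_j (all other components zero) is liftable
over ψ with lift ξ whose only nonzero component is ξ_y = v_i. -/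
theorem stmt9 (n : ℕ) (hn : 1 ≤ n) (i : Fin (n - 1)) :
    ∀ p : (Fin (n - 1) → ℝ) × ℝ,
      fderiv ℝ
          (fun q : (Fin (n - 1) → ℝ) × ℝ =>
            ((q.1, q.2 ^ 2, fun m => q.1 m * q.2) :
              (Fin (n - 1) → ℝ) × ℝ × (Fin (n - 1) → ℝ)))
          p ((0 : Fin (n - 1) → ℝ), p.1 i)
        = ((0 : Fin (n - 1) → ℝ), 2 * (p.1 i * p.2),
            fun j => p.1 i * p.1 j) := by
  intro p
  have hsnd : HasFDerivAt (fun q : (Fin (n - 1) → ℝ) × ℝ => q.2)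
      (ContinuousLinearMap.snd ℝ (Fin (n - 1) → ℝ) ℝ) p := hasFDerivAt_snd
  have h1 : HasFDerivAt (fun q : (Fin (n - 1) → ℝ) × ℝ => q.1)
      (ContinuousLinearMap.fst ℝ (Fin (n - 1) → ℝ) ℝ) p := hasFDerivAt_fst
  have h2 : HasFDerivAt (fun q : (Fin (n - 1) → ℝ) × ℝ => q.2 ^ 2)
      (p.2 • ContinuousLinearMap.snd ℝ (Fin (n - 1) → ℝ) ℝ +
        p.2 • ContinuousLinearMap.snd ℝ (Fin (n - 1) → ℝ) ℝ) p := by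
    have := hsnd.mul hsnd
    rw [show (fun q : (Fin (n - 1) → ℝ) × ℝ => q.2 ^ 2) = (fun q => q.2) * (fun q => q.2) from funext fun q => pow_two q.2]
    exact this
  have h3 : ∀ m : Fin (n - 1), HasFDerivAt (fun q : (Fin (n - 1) → ℝ) × ℝ => q.1 m * q.2)
      (p.1 m • ContinuousLinearMap.snd ℝ (Fin (n - 1) → ℝ) ℝ +
        p.2 • ((ContinuousLinearMap.proj m).comp
          (ContinuousLinearMap.fst ℝ (Fin (n - 1) → ℝ) ℝ))) p := by
    intro m
    have hm : HasFDerivAt (fun q : (Fin (n - 1) → ℝ) × ℝ => q.1 m)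
        ((ContinuousLinearMap.proj m).comp
          (ContinuousLinearMap.fst ℝ (Fin (n - 1) → ℝ) ℝ)) p :=
      ((ContinuousLinearMap.proj m).comp
        (ContinuousLinearMap.fst ℝ (Fin (n - 1) → ℝ) ℝ)).hasFDerivAt
    exact hm.mul hsnd
  have h3' : HasFDerivAt (fun q : (Fin (n - 1) → ℝ) × ℝ => (fun m => q.1 m * q.2))
      (ContinuousLinearMap.pi fun m =>
        p.1 m • ContinuousLinearMap.snd ℝ (Fin (n - 1) → ℝ) ℝ +
        p.2 • ((ContinuousLinearMap.proj m).comp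
          (ContinuousLinearMap.fst ℝ (Fin (n - 1) → ℝ) ℝ))) p :=
    hasFDerivAt_pi.mpr h3
  have h := h1.prodMk (h2.prodMk h3')
  rw [h.fderiv]
  refine Prod.ext ?_ (Prod.ext ?_ ?_)
  · simp
  · simp; ring
  · funext j; simp [mul_comm]
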